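/- Let f ∈ ℂ[y₁,…,y_{n−1}] be a homogeneous polynomial of degree k. For y ∈ ℂ^{n−1} define the vectors in ℂ^{2n}: u(y) = (1, y₁, …, y_{n−1}, (k−2)·f(y), −∂f/∂y₁(y), …, −∂f/∂y_{n−1}(y)) and, for 1 ≤ i ≤ n−1, v_i(y) = ∂u/∂y_i(y) = (0, e_i, (k−2)·∂f/∂y_i(y), −∂²f/∂y₁∂y_i(y), …, −∂²f/∂y_{n−1}∂y_i(y)), where e_i is the i-th standard basis vector of ℂ^{n−1}. Then for all y ∈ ℂ^{n−1} and all i, j: ω(u(y), v_i(y)) = 0 and ω(v_i(y), v_j(y)) = 0, where ω is the standard symplectic form. (Hence the tangent spaces to the affine cone over the variety X_f parametrized by u are Lagrangian, so X_f is a legendrian subvariety of ℙ^{2n−1}.) -/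

import Mathlib

open MvPolynomial Matrix

/-- The standard symplectic matrix `J = (0 Idₙ; −Idₙ 0)`. -/
def Jmat (n : ℕ) : Matrix (Fin (2 * n)) (Fin (2 * n)) ℂ :=
  fun i j => if i.1 + n = j.1 then 1 else if j.1 + n = i.1 then -1 else 0

/-- The parametrization of the affine cone over `X_f`:
`u(y) = (1, y₁,…,y_{n−1}, (k−2)f(y), −∂f/∂y₁(y),…,−∂f/∂y_{n−1}(y))`. -/
noncomputable def uvec (n k : ℕ) (f : MvPolynomial (Fin (n - 1)) ℂ)
    (y : Fin (n - 1) → ℂ) : Fin (2 * n) → ℂ :=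
  fun j =>
    if h0 : j.1 = 0 then 1
    else if h1 : j.1 < n then y ⟨j.1 - 1, by omega⟩
    else if h2 : j.1 = n then ((k : ℂ) - 2) * eval y f
    else - eval y (pderiv (⟨j.1 - n - 1, by have := j.isLt; omega⟩ : Fin (n - 1)) f)

/-- The partial derivative `v_i(y) = ∂u/∂y_i(y)`. -/
noncomputable def vvec (n k : ℕ) (f : MvPolynomial (Fin (n - 1)) ℂ) (i : Fin (n - 1))
    (y : Fin (n - 1) → ℂ) : Fin (2 * n) → ℂ :=
  fun j =>
    if h0 : j.1 = 0 then 0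
    else if h1 : j.1 < n then (if j.1 - 1 = i.1 then 1 else 0)
    else if h2 : j.1 = n then ((k : ℂ) - 2) * eval y (pderiv i f)
    else - eval y
      (pderiv (⟨j.1 - n - 1, by have := j.isLt; omega⟩ : Fin (n - 1)) (pderiv i f))

/- ## Auxiliary lemmas -/

lemma euler_monomial {m : ℕ} (d : Fin m →₀ ℕ) (c : ℂ) (y : Fin m → ℂ) :
    ∑ l, y l * eval y (pderiv l (monomial d c)) = (d.degree : ℂ) * eval y (monomial d c) := by
  have key : ∀ l : Fin m, y l * eval y (pderiv l (monomial d c))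
      = (d l : ℂ) * eval y (monomial d c) := by
    intro l
    rw [pderiv_monomial]
    rcases Nat.eq_zero_or_pos (d l) with h | h
    · simp [h]
    · have hd : d = (d - Finsupp.single l 1) + Finsupp.single l 1 := by
        ext j
        rcases eq_or_ne j l with rfl | hj
        · simp; omega
        · simp [Finsupp.single_apply, hj.symm]
      calc y l * eval y (monomial (d - Finsupp.single l 1) (c * (d l : ℂ)))
          = (d l : ℂ) * (eval y (monomial (d - Finsupp.single l 1) c) * y l) := by
            rw [eval_monomial, eval_monomial]; ring
        _ = (d l : ℂ) * eval y (monomial d c) := by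
            have hX : (monomial (Finsupp.single l 1) (1:ℂ)) = X l := rfl
            have hm : eval y (monomial d c)
                = eval y (monomial (d - Finsupp.single l 1) c) * y l := by
              conv_lhs => rw [hd, ← mul_one c, ← monomial_mul]
              rw [_root_.map_mul, hX, eval_X]
            rw [hm]
  rw [Finset.sum_congr rfl fun l _ => key l, ← Finset.sum_mul]
  congr 1
  rw [Finsupp.degree_apply, ← Finset.sum_subset (Finset.subset_univ d.support)
    (fun x _ hx => by simpa using hx), Nat.cast_sum]

lemma euler_eval {m k : ℕ} (f : MvPolynomial (Fin m) ℂ) (hf : f.IsHomogeneous k)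
    (y : Fin m → ℂ) :
    ∑ l, y l * eval y (pderiv l f) = (k : ℂ) * eval y f := by
  conv_lhs => rw [f.as_sum]
  conv_rhs => rw [f.as_sum]
  simp only [map_sum, Finset.mul_sum]
  rw [Finset.sum_comm]
  refine Finset.sum_congr rfl fun d hd => ?_
  rw [euler_monomial]
  congr 2
  rw [Finsupp.degree_eq_weight_one]
  exact hf (MvPolynomial.mem_support_iff.mp hd)

lemma pderiv_isHomogeneous {m k : ℕ} (i : Fin m) {f : MvPolynomial (Fin m) ℂ}
    (hf : f.IsHomogeneous k) : (pderiv i f).IsHomogeneous (k - 1) := by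
  conv_lhs => rw [f.as_sum]
  rw [map_sum]
  apply MvPolynomial.IsHomogeneous.sum
  intro d hd
  rw [pderiv_monomial]
  rcases Nat.eq_zero_or_pos (d i) with h | h
  · simp [h]
    exact isHomogeneous_zero _ _ _
  · apply isHomogeneous_monomial
    have hdd : d.degree = k := by
      rw [Finsupp.degree_eq_weight_one]
      exact hf (MvPolynomial.mem_support_iff.mp hd)
    have hsplit : d = (d - Finsupp.single i 1) + Finsupp.single i 1 := by
      ext j
      rcases eq_or_ne j i with rfl | hj
      · simp; omega
      · simp [Finsupp.single_apply, hj.symm]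
    have h1 : (Finsupp.single i 1 : Fin m →₀ ℕ).degree = 1 := by
      simp [Finsupp.degree_apply, Finsupp.support_single_ne_zero]
    have hadd : ((d - Finsupp.single i 1) + Finsupp.single i 1).degree
        = (d - Finsupp.single i 1).degree + (Finsupp.single i 1).degree := by
      simp only [Finsupp.degree_eq_weight_one, map_add]
    have := congrArg Finsupp.degree hsplit
    rw [hadd, h1, hdd] at this
    omega

lemma pderiv_zero_of_homog_zero {m : ℕ} (i : Fin m) {f : MvPolynomial (Fin m) ℂ}
    (hf : f.IsHomogeneous 0) : pderiv i f = 0 := by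
  have h0 : f.totalDegree = 0 := (totalDegree_zero_iff_isHomogeneous _).mpr hf
  rw [totalDegree_eq_zero_iff] at h0
  conv_lhs => rw [f.as_sum]
  rw [map_sum]
  apply Finset.sum_eq_zero
  intro d hd
  rw [pderiv_monomial, h0 d hd i]
  simp

lemma euler_pderiv {m k : ℕ} (i : Fin m) {f : MvPolynomial (Fin m) ℂ}
    (hf : f.IsHomogeneous k) (y : Fin m → ℂ) :
    ∑ l, y l * eval y (pderiv l (pderiv i f)) = ((k : ℂ) - 1) * eval y (pderiv i f) := by
  rcases Nat.eq_zero_or_pos k with rfl | hk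
  · simp [pderiv_zero_of_homog_zero i hf]
  · rw [euler_eval _ (pderiv_isHomogeneous i hf) y]
    congr 1
    have : (k : ℂ) = ((k - 1 : ℕ) : ℂ) + 1 := by
      rw [Nat.cast_sub hk]; ring
    rw [this]; ring

lemma pderiv_pderiv_comm {m : ℕ} (i j : Fin m) (f : MvPolynomial (Fin m) ℂ) :
    pderiv i (pderiv j f) = pderiv j (pderiv i f) := by
  rcases eq_or_ne i j with rfl | hij
  · rfl
  conv_lhs => rw [f.as_sum]
  conv_rhs => rw [f.as_sum]
  simp only [map_sum]
  refine Finset.sum_congr rfl fun d _ => ?_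
  rw [pderiv_monomial, pderiv_monomial, pderiv_monomial, pderiv_monomial]
  have hsub : d - Finsupp.single j 1 - Finsupp.single i 1
      = d - Finsupp.single i 1 - Finsupp.single j 1 := by
    ext x
    simp [Finsupp.single_apply]
    omega
  rw [hsub]
  congr 1
  rw [Finsupp.tsub_apply, Finsupp.tsub_apply, Finsupp.single_apply, Finsupp.single_apply,
    if_neg (Ne.symm hij), if_neg hij, Nat.sub_zero, Nat.sub_zero]
  ring

lemma Jmat_mulVec (n : ℕ) (b : Fin (2*n) → ℂ) (p : Fin (2*n)) :
    (Jmat n).mulVec b p =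
      if h : p.1 < n then b ⟨p.1 + n, by omega⟩
      else - b ⟨p.1 - n, by have := p.isLt; omega⟩ := by
  rw [mulVec, dotProduct]
  split_ifs with h
  · refine Finset.sum_eq_single_of_mem ⟨p.1 + n, by omega⟩ (Finset.mem_univ _)
      (fun q _ hq => ?_) |>.trans ?_
    · have hq' : q.1 ≠ p.1 + n := fun e => hq (Fin.ext e)
      simp only [Jmat]
      rw [if_neg (by omega), if_neg (by omega), zero_mul]
    · simp [Jmat]
  · refine Finset.sum_eq_single_of_mem ⟨p.1 - n, by have := p.isLt; omega⟩ (Finset.mem_univ _)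
      (fun q _ hq => ?_) |>.trans ?_
    · have hq' : q.1 ≠ p.1 - n := fun e => hq (Fin.ext e)
      have := q.isLt
      simp only [Jmat]
      rw [if_neg (by omega), if_neg (by omega), zero_mul]
    · have hp2 := p.isLt
      simp only [Jmat]
      rw [if_neg (by omega), if_pos (by omega), neg_one_mul]

lemma omega_sum (n : ℕ) (a b : Fin (2*n) → ℂ) :
    a ⬝ᵥ (Jmat n).mulVec b = ∑ i : Fin n,
      (a ⟨i.1, by omega⟩ * b ⟨i.1 + n, by omega⟩ - a ⟨i.1 + n, by omega⟩ * b ⟨i.1, by omega⟩) := by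
  have h1 : ∀ i : Fin n, ((finSumFinEquiv.trans (finCongr (two_mul n).symm)) (Sum.inl i)) =
      (⟨i.1, by omega⟩ : Fin (2*n)) := fun i => by
    simp [finSumFinEquiv, finCongr, Fin.ext_iff]
  have h2 : ∀ i : Fin n, ((finSumFinEquiv.trans (finCongr (two_mul n).symm)) (Sum.inr i)) =
      (⟨i.1 + n, by omega⟩ : Fin (2*n)) := fun i => by
    simp [finSumFinEquiv, finCongr, Fin.ext_iff]
  rw [dotProduct, ← Equiv.sum_comp (finSumFinEquiv.trans (finCongr (two_mul n).symm))
    (fun p => a p * (Jmat n).mulVec b p), Fintype.sum_sum_type, Finset.sum_sub_distrib,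
    sub_eq_add_neg, ← Finset.sum_neg_distrib]
  congr 1
  · refine Finset.sum_congr rfl fun i _ => ?_
    simp only [h1]
    rw [Jmat_mulVec, dif_pos i.isLt]
  · refine Finset.sum_congr rfl fun i _ => ?_
    simp only [h2]
    rw [Jmat_mulVec, dif_neg (Nat.not_lt.mpr (Nat.le_add_left n _))]
    have h3 : (⟨i.1 + n - n, by omega⟩ : Fin (2*n)) = ⟨i.1, by omega⟩ := by
      simp [Fin.ext_iff]
    rw [h3]
    ring

/- evaluation lemmas at the index shapes that occur -/
section evalvecs
variable (m k : ℕ) (f : MvPolynomial (Fin (m+1-1)) ℂ) (i : Fin (m+1-1)) (y : Fin (m+1-1) → ℂ)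

lemma uvec_s0 (h : 0 < 2*(m+1)) : uvec (m+1) k f y ⟨0, h⟩ = 1 := by
  simp [uvec]

lemma uvec_sm (h : m+1 < 2*(m+1)) : uvec (m+1) k f y ⟨m+1, h⟩ = ((k:ℂ)-2) * eval y f := by
  simp only [uvec]; rw [dif_neg (by omega), dif_neg (by omega)]; simp

lemma uvec_s1 (l : Fin m) (h : l.1+1 < 2*(m+1)) :
    uvec (m+1) k f y ⟨l.1+1, h⟩ = y ⟨l.1, by omega⟩ := by
  simp only [uvec]; rw [dif_neg (by omega), dif_pos (by omega)]
  congr 1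

lemma uvec_s2 (l : Fin m) (h : l.1+1+(m+1) < 2*(m+1)) :
    uvec (m+1) k f y ⟨l.1+1+(m+1), h⟩
      = - eval y (pderiv (⟨l.1, by omega⟩ : Fin (m+1-1)) f) := by
  simp only [uvec]; rw [dif_neg (by omega), dif_neg (by omega), dif_neg (by omega)]
  have h4 : (⟨l.1+1+(m+1)-(m+1)-1, by omega⟩ : Fin (m+1-1)) = ⟨l.1, by omega⟩ :=
    Fin.ext (by simp)
  rw [h4]

lemma vvec_s0 (h : 0 < 2*(m+1)) : vvec (m+1) k f i y ⟨0, h⟩ = 0 := by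
  simp [vvec]

lemma vvec_sm (h : m+1 < 2*(m+1)) :
    vvec (m+1) k f i y ⟨m+1, h⟩ = ((k:ℂ)-2) * eval y (pderiv i f) := by
  simp only [vvec]; rw [dif_neg (by omega), dif_neg (by omega)]; simp

lemma vvec_s1 (l : Fin m) (h : l.1+1 < 2*(m+1)) :
    vvec (m+1) k f i y ⟨l.1+1, h⟩ = if l.1 = i.1 then 1 else 0 := by
  simp only [vvec]; rw [dif_neg (by omega), dif_pos (by omega)]
  simp [Nat.add_sub_cancel]

lemma vvec_s2 (l : Fin m) (h : l.1+1+(m+1) < 2*(m+1)) :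
    vvec (m+1) k f i y ⟨l.1+1+(m+1), h⟩
      = - eval y (pderiv (⟨l.1, by omega⟩ : Fin (m+1-1)) (pderiv i f)) := by
  simp only [vvec]; rw [dif_neg (by omega), dif_neg (by omega), dif_neg (by omega)]
  have h4 : (⟨l.1+1+(m+1)-(m+1)-1, by omega⟩ : Fin (m+1-1)) = ⟨l.1, by omega⟩ :=
    Fin.ext (by simp)
  rw [h4]

end evalvecs

/-- For a homogeneous polynomial `f` of degree `k` in `n−1` variables, the tangent vectors
`u(y)` and `v_i(y)` to the affine cone over `X_f` pair to zero under the standard symplectic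
form: hence the cone's tangent spaces are Lagrangian and `X_f ⊆ ℙ^{2n−1}` is legendrian. -/
theorem Xf_is_legendrian (n : ℕ) (hn : 2 ≤ n) (k : ℕ)
    (f : MvPolynomial (Fin (n - 1)) ℂ) (hf : f.IsHomogeneous k) :
    ∀ (y : Fin (n - 1) → ℂ) (i j : Fin (n - 1)),
      uvec n k f y ⬝ᵥ (Jmat n).mulVec (vvec n k f i y) = 0 ∧
      vvec n k f i y ⬝ᵥ (Jmat n).mulVec (vvec n k f j y) = 0 := by
  obtain ⟨m, rfl⟩ : ∃ m, n = m + 1 := ⟨n - 1, by omega⟩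
  intro y i j
  have hm : 1 ≤ m := by omega
  constructor
  · rw [omega_sum, Fin.sum_univ_succ]
    simp only [Fin.val_succ, Fin.val_zero, zero_add]
    simp only [uvec_s0, uvec_sm, vvec_s0, vvec_sm, uvec_s1, uvec_s2, vvec_s1, vvec_s2]
    simp only [one_mul, mul_zero, sub_zero, mul_neg, neg_mul, sub_neg_eq_add, neg_neg]
    rw [Finset.sum_add_distrib, Finset.sum_neg_distrib]
    have hEuler : (∑ x : Fin m, y ⟨x.1, x.isLt⟩ *
        eval y (pderiv (⟨x.1, x.isLt⟩ : Fin (m+1-1)) (pderiv i f)))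
        = ((k:ℂ)-1) * eval y (pderiv i f) := euler_pderiv i hf y
    have hδ : (∑ x : Fin m, eval y (pderiv (⟨x.1, x.isLt⟩ : Fin (m+1-1)) f) *
        (if x.1 = i.1 then (1:ℂ) else 0)) = eval y (pderiv i f) := by
      rw [Finset.sum_eq_single_of_mem (⟨i.1, by omega⟩ : Fin m) (Finset.mem_univ _)
        (fun x _ hx => by
          rw [if_neg (fun e => hx (Fin.ext e)), mul_zero])]
      have : ((⟨i.1, by omega⟩ : Fin m)).1 = i.1 := rfl
      rw [if_pos this, mul_one]
    rw [hEuler, hδ]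
    ring
  · rw [omega_sum, Fin.sum_univ_succ]
    simp only [Fin.val_succ, Fin.val_zero, zero_add]
    simp only [vvec_s0, vvec_sm, vvec_s1, vvec_s2]
    simp only [zero_mul, mul_zero, zero_sub, sub_zero, mul_neg, neg_mul, sub_neg_eq_add,
      neg_neg, zero_add]
    have hδ1 : (∑ x : Fin m, (if x.1 = i.1 then (1:ℂ) else 0) *
        eval y (pderiv (⟨x.1, x.isLt⟩ : Fin (m+1-1)) (pderiv j f)))
        = eval y (pderiv i (pderiv j f)) := by
      rw [Finset.sum_eq_single_of_mem (⟨i.1, by omega⟩ : Fin m) (Finset.mem_univ _)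
        (fun x _ hx => by
          rw [if_neg (fun e => hx (Fin.ext e)), zero_mul])]
      have : ((⟨i.1, by omega⟩ : Fin m)).1 = i.1 := rfl
      rw [if_pos this, one_mul]
    have hδ2 : (∑ x : Fin m, eval y (pderiv (⟨x.1, x.isLt⟩ : Fin (m+1-1)) (pderiv i f)) *
        (if x.1 = j.1 then (1:ℂ) else 0))
        = eval y (pderiv j (pderiv i f)) := by
      rw [Finset.sum_eq_single_of_mem (⟨j.1, by omega⟩ : Fin m) (Finset.mem_univ _)
        (fun x _ hx => by
          rw [if_neg (fun e => hx (Fin.ext e)), mul_zero])]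
      have : ((⟨j.1, by omega⟩ : Fin m)).1 = j.1 := rfl
      rw [if_pos this, mul_one]
    rw [Finset.sum_add_distrib, Finset.sum_neg_distrib, hδ1, hδ2, pderiv_pderiv_comm]
    ring
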